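/- Let V be a finite-dimensional real vector space. A 5-linear map T : V^5 → ℝ is an algebraic covariant derivative curvature tensor if and only if (1/24)·y_{t'}*T = T, where y_{t'} is the Young symmetrizer of the standard tableau t' with rows {1,3,5} and {2,4}. -/

import Mathlib

/-- Action of a group ring element `a ∈ ℝ[S_r]` on an `r`-multilinear map:
`(aT)(v₁,…,v_r) = Σ_p a(p)·T(v_{p(1)},…,v_{p(r)})`. -/
noncomputable def gact {V : Type} [AddCommGroup V] [Module ℝ V] {r : ℕ}
    (a : MonoidAlgebra ℝ (Equiv.Perm (Fin r)))
    (T : MultilinearMap ℝ (fun _ : Fin r => V) ℝ) :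
    MultilinearMap ℝ (fun _ : Fin r => V) ℝ :=
  ∑ p : Equiv.Perm (Fin r), a.coeff p • T.domDomCongr p
/-- The star map `a* := Σ_p a(p)·p⁻¹` on the group ring `ℝ[S_r]`. -/
noncomputable def astar {r : ℕ} (a : MonoidAlgebra ℝ (Equiv.Perm (Fin r))) :
    MonoidAlgebra ℝ (Equiv.Perm (Fin r)) :=
  MonoidAlgebra.ofCoeff (Finsupp.equivFunOnFinite.symm (fun p => a.coeff p⁻¹))
/-- The Young symmetrizer `y_{t'} = Σ_{p∈H_{t'}} Σ_{q∈V_{t'}} sign(q)·(p∘q)` of the tableau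
with rows `{1,3,5}`, `{2,4}` (indices `0`-based in `Fin 5`): `H_{t'}` is the group of
permutations mapping `{0,2,4}` to itself and `{1,3}` to itself, and
`V_{t'} = {id, (1 2), (3 4), (1 2)(3 4)}`. -/
noncomputable def ytp : MonoidAlgebra ℝ (Equiv.Perm (Fin 5)) :=
  (∑ p ∈ Finset.univ.filter (fun p : Equiv.Perm (Fin 5) =>
      ({0, 2, 4} : Finset (Fin 5)).image p = {0, 2, 4} ∧
      ({1, 3} : Finset (Fin 5)).image p = {1, 3}),
    MonoidAlgebra.single p (1 : ℝ)) *
  (MonoidAlgebra.single 1 1 - MonoidAlgebra.single (Equiv.swap 0 1) 1 -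
     MonoidAlgebra.single (Equiv.swap 2 3) 1 +
     MonoidAlgebra.single (Equiv.swap 0 1 * Equiv.swap 2 3) 1)


lemma astar_add {r : ℕ} (a b : MonoidAlgebra ℝ (Equiv.Perm (Fin r))) :
    astar (a + b) = astar a + astar b := by ext p; simp [astar]

lemma astar_sub {r : ℕ} (a b : MonoidAlgebra ℝ (Equiv.Perm (Fin r))) :
    astar (a - b) = astar a - astar b := by ext p; simp [astar]

lemma astar_single {r : ℕ} (g : Equiv.Perm (Fin r)) (c : ℝ) :
    astar (MonoidAlgebra.single g c) = MonoidAlgebra.single g⁻¹ c := by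
  ext p
  simp only [astar, MonoidAlgebra.coeff_ofCoeff, Finsupp.coe_equivFunOnFinite_symm]
  rw [MonoidAlgebra.single_apply, MonoidAlgebra.single_apply]
  by_cases h : g⁻¹ = p
  · rw [if_pos (by rw [← h]; simp), if_pos h]
  · rw [if_neg (fun hh => h (by rw [hh]; simp)), if_neg h]

lemma gact_add {V : Type} [AddCommGroup V] [Module ℝ V] {r : ℕ}
    (a b : MonoidAlgebra ℝ (Equiv.Perm (Fin r)))
    (T : MultilinearMap ℝ (fun _ : Fin r => V) ℝ) :
    gact (a + b) T = gact a T + gact b T := by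
  simp only [gact, show ∀ p : Equiv.Perm (Fin r), (a + b).coeff p = a.coeff p + b.coeff p from fun _ => rfl,
    add_smul, Finset.sum_add_distrib]

lemma gact_sub {V : Type} [AddCommGroup V] [Module ℝ V] {r : ℕ}
    (a b : MonoidAlgebra ℝ (Equiv.Perm (Fin r)))
    (T : MultilinearMap ℝ (fun _ : Fin r => V) ℝ) :
    gact (a - b) T = gact a T - gact b T := by
  simp only [gact, show ∀ p : Equiv.Perm (Fin r), (a - b).coeff p = a.coeff p - b.coeff p from fun _ => rfl,
    sub_smul, Finset.sum_sub_distrib]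
  rw [← Finset.sum_sub_distrib]; exact Finset.sum_congr rfl fun p _ => by ext v; simp [sub_mul]

lemma gact_single {V : Type} [AddCommGroup V] [Module ℝ V] {r : ℕ}
    (g : Equiv.Perm (Fin r)) (c : ℝ)
    (T : MultilinearMap ℝ (fun _ : Fin r => V) ℝ) :
    gact (MonoidAlgebra.single g c) T = c • T.domDomCongr g := by
  rw [gact, Finset.sum_eq_single g]
  · rw [MonoidAlgebra.single_apply]; simp
  · intro p _ hp; rw [MonoidAlgebra.single_apply, if_neg (Ne.symm hp), zero_smul]
  · intro h; exact absurd (Finset.mem_univ g) h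

lemma hfilter : (Finset.univ.filter (fun p : Equiv.Perm (Fin 5) =>
      ({0, 2, 4} : Finset (Fin 5)).image p = {0, 2, 4} ∧
      ({1, 3} : Finset (Fin 5)).image p = {1, 3})) = {(1 : Equiv.Perm (Fin 5)), (Equiv.swap 1 3 : Equiv.Perm (Fin 5)), (Equiv.swap 0 2 : Equiv.Perm (Fin 5)), (Equiv.swap 0 2 * Equiv.swap 1 3 : Equiv.Perm (Fin 5)), (Equiv.swap 0 4 : Equiv.Perm (Fin 5)), (Equiv.swap 0 4 * Equiv.swap 1 3 : Equiv.Perm (Fin 5)), (Equiv.swap 2 4 : Equiv.Perm (Fin 5)), (Equiv.swap 2 4 * Equiv.swap 1 3 : Equiv.Perm (Fin 5)), (Equiv.swap 0 2 * Equiv.swap 2 4 : Equiv.Perm (Fin 5)), (Equiv.swap 0 2 * Equiv.swap 2 4 * Equiv.swap 1 3 : Equiv.Perm (Fin 5)), (Equiv.swap 2 4 * Equiv.swap 0 2 : Equiv.Perm (Fin 5)), (Equiv.swap 2 4 * Equiv.swap 0 2 * Equiv.swap 1 3 : Equiv.Perm (Fin 5))} := by decide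

lemma hsum : (∑ p ∈ Finset.univ.filter (fun p : Equiv.Perm (Fin 5) =>
      ({0, 2, 4} : Finset (Fin 5)).image p = {0, 2, 4} ∧
      ({1, 3} : Finset (Fin 5)).image p = {1, 3}),
    MonoidAlgebra.single p (1 : ℝ)) = MonoidAlgebra.single (1 : Equiv.Perm (Fin 5)) (1:ℝ) + MonoidAlgebra.single (Equiv.swap 1 3 : Equiv.Perm (Fin 5)) (1:ℝ) + MonoidAlgebra.single (Equiv.swap 0 2 : Equiv.Perm (Fin 5)) (1:ℝ) + MonoidAlgebra.single (Equiv.swap 0 2 * Equiv.swap 1 3 : Equiv.Perm (Fin 5)) (1:ℝ) + MonoidAlgebra.single (Equiv.swap 0 4 : Equiv.Perm (Fin 5)) (1:ℝ) + MonoidAlgebra.single (Equiv.swap 0 4 * Equiv.swap 1 3 : Equiv.Perm (Fin 5)) (1:ℝ) + MonoidAlgebra.single (Equiv.swap 2 4 : Equiv.Perm (Fin 5)) (1:ℝ) + MonoidAlgebra.single (Equiv.swap 2 4 * Equiv.swap 1 3 : Equiv.Perm (Fin 5)) (1:ℝ) + MonoidAlgebra.single (Equiv.swap 0 2 * Equiv.swap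 2 4 : Equiv.Perm (Fin 5)) (1:ℝ) + MonoidAlgebra.single (Equiv.swap 0 2 * Equiv.swap 2 4 * Equiv.swap 1 3 : Equiv.Perm (Fin 5)) (1:ℝ) + MonoidAlgebra.single (Equiv.swap 2 4 * Equiv.swap 0 2 : Equiv.Perm (Fin 5)) (1:ℝ) + MonoidAlgebra.single (Equiv.swap 2 4 * Equiv.swap 0 2 * Equiv.swap 1 3 : Equiv.Perm (Fin 5)) (1:ℝ) := by
  rw [hfilter]
  rw [Finset.sum_insert (by decide), Finset.sum_insert (by decide), Finset.sum_insert (by decide), Finset.sum_insert (by decide), Finset.sum_insert (by decide), Finset.sum_insert (by decide), Finset.sum_insert (by decide), Finset.sum_insert (by decide), Finset.sum_insert (by decide), Finset.sum_insert (by decide), Finset.sum_insert (by decide), Finset.sum_singleton]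
  abel

set_option maxHeartbeats 2000000 in
lemma hytp : ytp = MonoidAlgebra.single (1 : Equiv.Perm (Fin 5)) (1:ℝ) - MonoidAlgebra.single (Equiv.swap 0 1 : Equiv.Perm (Fin 5)) (1:ℝ) - MonoidAlgebra.single (Equiv.swap 2 3 : Equiv.Perm (Fin 5)) (1:ℝ) + MonoidAlgebra.single (Equiv.swap 0 1 * Equiv.swap 2 3 : Equiv.Perm (Fin 5)) (1:ℝ) + MonoidAlgebra.single (Equiv.swap 1 3 : Equiv.Perm (Fin 5)) (1:ℝ) - MonoidAlgebra.single (Equiv.swap 1 3 * Equiv.swap 0 1 : Equiv.Perm (Fin 5)) (1:ℝ) - MonoidAlgebra.single (Equiv.swap 1 3 * Equiv.swap 2 3 : Equiv.Perm (Fin 5)) (1:ℝ) + MonoidAlgebra.single (Equiv.swap 1 3 * (Equiv.swap 0 1 * Equiv.swap 2 3) : Equiv.Perm (Fin 5)) (1:ℝ) + MonoidAlgebra.single (Equiv.swap 0 2 : Equiv.Perm (Fin 5)) (1:ℝ) - MonoidAlgebra.single (Equiv.swap 0 2 * Equiv.swap 0 1 : Equiv.Perm (Fin 5)) (1:ℝ)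 - MonoidAlgebra.single (Equiv.swap 0 2 * Equiv.swap 2 3 : Equiv.Perm (Fin 5)) (1:ℝ) + MonoidAlgebra.single (Equiv.swap 0 2 * (Equiv.swap 0 1 * Equiv.swap 2 3) : Equiv.Perm (Fin 5)) (1:ℝ) + MonoidAlgebra.single (Equiv.swap 0 2 * Equiv.swap 1 3 : Equiv.Perm (Fin 5)) (1:ℝ) - MonoidAlgebra.single (Equiv.swap 0 2 * Equiv.swap 1 3 * Equiv.swap 0 1 : Equiv.Perm (Fin 5)) (1:ℝ) - MonoidAlgebra.single (Equiv.swap 0 2 * Equiv.swap 1 3 * Equiv.swap 2 3 : Equiv.Perm (Fin 5)) (1:ℝ) + MonoidAlgebra.single (Equiv.swap 0 2 * Equiv.swap 1 3 * (Equiv.swap 0 1 * Equiv.swap 2 3) : Equiv.Perm (Fin 5)) (1:ℝ) + MonoidAlgebra.single (Equiv.swap 0 4 : Equiv.Perm (Fin 5)) (1:ℝ) - MonoidAlgebra.single (Equiv.swap 0 4 * Equiv.swap 0 1 : Equiv.Perm (Fin 5)) (1:ℝ) - MonoidAlgebra.single (Equiv.swap 0 4 * Equiv.swap 2 3 : Equiv.Perm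 (Fin 5)) (1:ℝ) + MonoidAlgebra.single (Equiv.swap 0 4 * (Equiv.swap 0 1 * Equiv.swap 2 3) : Equiv.Perm (Fin 5)) (1:ℝ) + MonoidAlgebra.single (Equiv.swap 0 4 * Equiv.swap 1 3 : Equiv.Perm (Fin 5)) (1:ℝ) - MonoidAlgebra.single (Equiv.swap 0 4 * Equiv.swap 1 3 * Equiv.swap 0 1 : Equiv.Perm (Fin 5)) (1:ℝ) - MonoidAlgebra.single (Equiv.swap 0 4 * Equiv.swap 1 3 * Equiv.swap 2 3 : Equiv.Perm (Fin 5)) (1:ℝ) + MonoidAlgebra.single (Equiv.swap 0 4 * Equiv.swap 1 3 * (Equiv.swap 0 1 * Equiv.swap 2 3) : Equiv.Perm (Fin 5)) (1:ℝ) + MonoidAlgebra.single (Equiv.swap 2 4 : Equiv.Perm (Fin 5)) (1:ℝ) - MonoidAlgebra.single (Equiv.swap 2 4 * Equiv.swap 0 1 : Equiv.Perm (Fin 5)) (1:ℝ) - MonoidAlgebra.single (Equiv.swap 2 4 * Equiv.swap 2 3 : Equiv.Perm (Fin 5)) (1:ℝ) + MonoidAlgebra.single (Equiv.swap 2 4 *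 (Equiv.swap 0 1 * Equiv.swap 2 3) : Equiv.Perm (Fin 5)) (1:ℝ) + MonoidAlgebra.single (Equiv.swap 2 4 * Equiv.swap 1 3 : Equiv.Perm (Fin 5)) (1:ℝ) - MonoidAlgebra.single (Equiv.swap 2 4 * Equiv.swap 1 3 * Equiv.swap 0 1 : Equiv.Perm (Fin 5)) (1:ℝ) - MonoidAlgebra.single (Equiv.swap 2 4 * Equiv.swap 1 3 * Equiv.swap 2 3 : Equiv.Perm (Fin 5)) (1:ℝ) + MonoidAlgebra.single (Equiv.swap 2 4 * Equiv.swap 1 3 * (Equiv.swap 0 1 * Equiv.swap 2 3) : Equiv.Perm (Fin 5)) (1:ℝ) + MonoidAlgebra.single (Equiv.swap 0 2 * Equiv.swap 2 4 : Equiv.Perm (Fin 5)) (1:ℝ) - MonoidAlgebra.single (Equiv.swap 0 2 * Equiv.swap 2 4 * Equiv.swap 0 1 : Equiv.Perm (Fin 5)) (1:ℝ) - MonoidAlgebra.single (Equiv.swap 0 2 * Equiv.swap 2 4 * Equiv.swap 2 3 : Equiv.Perm (Fin 5)) (1:ℝ) + MonoidAlgebra.single (Equiv.swap 0 2 * Equiv.swap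 2 4 * (Equiv.swap 0 1 * Equiv.swap 2 3) : Equiv.Perm (Fin 5)) (1:ℝ) + MonoidAlgebra.single (Equiv.swap 0 2 * Equiv.swap 2 4 * Equiv.swap 1 3 : Equiv.Perm (Fin 5)) (1:ℝ) - MonoidAlgebra.single (Equiv.swap 0 2 * Equiv.swap 2 4 * Equiv.swap 1 3 * Equiv.swap 0 1 : Equiv.Perm (Fin 5)) (1:ℝ) - MonoidAlgebra.single (Equiv.swap 0 2 * Equiv.swap 2 4 * Equiv.swap 1 3 * Equiv.swap 2 3 : Equiv.Perm (Fin 5)) (1:ℝ) + MonoidAlgebra.single (Equiv.swap 0 2 * Equiv.swap 2 4 * Equiv.swap 1 3 * (Equiv.swap 0 1 * Equiv.swap 2 3) : Equiv.Perm (Fin 5)) (1:ℝ) + MonoidAlgebra.single (Equiv.swap 2 4 * Equiv.swap 0 2 : Equiv.Perm (Fin 5)) (1:ℝ) - MonoidAlgebra.single (Equiv.swap 2 4 * Equiv.swap 0 2 * Equiv.swap 0 1 : Equiv.Perm (Fin 5)) (1:ℝ) - MonoidAlgebra.single (Equiv.swap 2 4 * Equiv.swap 0 2 * Equiv.swap 2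 3 : Equiv.Perm (Fin 5)) (1:ℝ) + MonoidAlgebra.single (Equiv.swap 2 4 * Equiv.swap 0 2 * (Equiv.swap 0 1 * Equiv.swap 2 3) : Equiv.Perm (Fin 5)) (1:ℝ) + MonoidAlgebra.single (Equiv.swap 2 4 * Equiv.swap 0 2 * Equiv.swap 1 3 : Equiv.Perm (Fin 5)) (1:ℝ) - MonoidAlgebra.single (Equiv.swap 2 4 * Equiv.swap 0 2 * Equiv.swap 1 3 * Equiv.swap 0 1 : Equiv.Perm (Fin 5)) (1:ℝ) - MonoidAlgebra.single (Equiv.swap 2 4 * Equiv.swap 0 2 * Equiv.swap 1 3 * Equiv.swap 2 3 : Equiv.Perm (Fin 5)) (1:ℝ) + MonoidAlgebra.single (Equiv.swap 2 4 * Equiv.swap 0 2 * Equiv.swap 1 3 * (Equiv.swap 0 1 * Equiv.swap 2 3) : Equiv.Perm (Fin 5)) (1:ℝ) := by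
  unfold ytp
  rw [hsum]
  simp only [mul_sub, mul_add, sub_mul, add_mul, MonoidAlgebra.single_mul_single,
    mul_one, one_mul]
  abel

set_option maxHeartbeats 2000000 in
lemma ytp_expand {V : Type} [AddCommGroup V] [Module ℝ V]
    (T : MultilinearMap ℝ (fun _ : Fin 5 => V) ℝ) (a b c d e : V) :
    gact (astar ytp) T ![a, b, c, d, e] = T ![a, b, c, d, e] - T ![b, a, c, d, e] - T ![a, b, d, c, e] + T ![b, a, d, c, e] + T ![a, d, c, b, e] - T ![b, d, c, a, e] - T ![a, c, d, b, e] + T ![b, c, d, a, e] + T ![c, b, a, d, e] - T ![c, a, b, d, e] - T ![d, b, a, c, e] + T ![d, a, b, c, e] + T ![c, d, a, b, e] - T ![c, d, b, a, e] - T ![d, c, a, b, e] + T ![d, c, b, a, e] + T ![e, b, c, d, a] - T ![e, a, c, d, b] - T ![e, b, d, c, a] + T ![e, a, d, c, b] + T ![e, d, c, b, a] - T ![e, d, c, a, b] - T ![e, c, d, b, a] + T ![e, c, d, a, b] + T ![a, b, e, d, c] - T ![b, a, e, d, c] - T ![a, b, e, c, d] + T ![b, a, e, c, d] + T ![a, d,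 e, b, c] - T ![b, d, e, a, c] - T ![a, c, e, b, d] + T ![b, c, e, a, d] + T ![e, b, a, d, c] - T ![e, a, b, d, c] - T ![e, b, a, c, d] + T ![e, a, b, c, d] + T ![e, d, a, b, c] - T ![e, d, b, a, c] - T ![e, c, a, b, d] + T ![e, c, b, a, d] + T ![c, b, e, d, a] - T ![c, a, e, d, b] - T ![d, b, e, c, a] + T ![d, a, e, c, b] + T ![c, d, e, b, a] - T ![c, d, e, a, b] - T ![d, c, e, b, a] + T ![d, c, e, a, b] := by
  have E0 : T.domDomCongr (1 : Equiv.Perm (Fin 5)) ![a, b, c, d, e] = T ![a, b, c, d, e] := congrArg T (by funext i; fin_cases i <;> rfl)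
  have E1 : T.domDomCongr ((Equiv.swap 0 1)⁻¹ : Equiv.Perm (Fin 5)) ![a, b, c, d, e] = T ![b, a, c, d, e] := congrArg T (by funext i; fin_cases i <;> rfl)
  have E2 : T.domDomCongr ((Equiv.swap 2 3)⁻¹ : Equiv.Perm (Fin 5)) ![a, b, c, d, e] = T ![a, b, d, c, e] := congrArg T (by funext i; fin_cases i <;> rfl)
  have E3 : T.domDomCongr ((Equiv.swap 0 1 * Equiv.swap 2 3)⁻¹ : Equiv.Perm (Fin 5)) ![a, b, c, d, e] = T ![b, a, d, c, e] := congrArg T (by funext i; fin_cases i <;> rfl)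
  have E4 : T.domDomCongr ((Equiv.swap 1 3)⁻¹ : Equiv.Perm (Fin 5)) ![a, b, c, d, e] = T ![a, d, c, b, e] := congrArg T (by funext i; fin_cases i <;> rfl)
  have E5 : T.domDomCongr ((Equiv.swap 1 3 * Equiv.swap 0 1)⁻¹ : Equiv.Perm (Fin 5)) ![a, b, c, d, e] = T ![b, d, c, a, e] := congrArg T (by funext i; fin_cases i <;> rfl)
  have E6 : T.domDomCongr ((Equiv.swap 1 3 * Equiv.swap 2 3)⁻¹ : Equiv.Perm (Fin 5)) ![a, b, c, d, e] = T ![a, c, d, b, e] := congrArg T (by funext i; fin_cases i <;> rfl)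
  have E7 : T.domDomCongr ((Equiv.swap 1 3 * (Equiv.swap 0 1 * Equiv.swap 2 3))⁻¹ : Equiv.Perm (Fin 5)) ![a, b, c, d, e] = T ![b, c, d, a, e] := congrArg T (by funext i; fin_cases i <;> rfl)
  have E8 : T.domDomCongr ((Equiv.swap 0 2)⁻¹ : Equiv.Perm (Fin 5)) ![a, b, c, d, e] = T ![c, b, a, d, e] := congrArg T (by funext i; fin_cases i <;> rfl)
  have E9 : T.domDomCongr ((Equiv.swap 0 2 * Equiv.swap 0 1)⁻¹ : Equiv.Perm (Fin 5)) ![a, b, c, d, e] = T ![c, a, b, d, e] := congrArg T (by funext i; fin_cases i <;> rfl)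
  have E10 : T.domDomCongr ((Equiv.swap 0 2 * Equiv.swap 2 3)⁻¹ : Equiv.Perm (Fin 5)) ![a, b, c, d, e] = T ![d, b, a, c, e] := congrArg T (by funext i; fin_cases i <;> rfl)
  have E11 : T.domDomCongr ((Equiv.swap 0 2 * (Equiv.swap 0 1 * Equiv.swap 2 3))⁻¹ : Equiv.Perm (Fin 5)) ![a, b, c, d, e] = T ![d, a, b, c, e] := congrArg T (by funext i; fin_cases i <;> rfl)
  have E12 : T.domDomCongr ((Equiv.swap 0 2 * Equiv.swap 1 3)⁻¹ : Equiv.Perm (Fin 5)) ![a, b, c, d, e] = T ![c, d, a, b, e] := congrArg T (by funext i; fin_cases i <;> rfl)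
  have E13 : T.domDomCongr ((Equiv.swap 0 2 * Equiv.swap 1 3 * Equiv.swap 0 1)⁻¹ : Equiv.Perm (Fin 5)) ![a, b, c, d, e] = T ![c, d, b, a, e] := congrArg T (by funext i; fin_cases i <;> rfl)
  have E14 : T.domDomCongr ((Equiv.swap 0 2 * Equiv.swap 1 3 * Equiv.swap 2 3)⁻¹ : Equiv.Perm (Fin 5)) ![a, b, c, d, e] = T ![d, c, a, b, e] := congrArg T (by funext i; fin_cases i <;> rfl)
  have E15 : T.domDomCongr ((Equiv.swap 0 2 * Equiv.swap 1 3 * (Equiv.swap 0 1 * Equiv.swap 2 3))⁻¹ : Equiv.Perm (Fin 5)) ![a, b, c, d, e] = T ![d, c, b, a, e] := congrArg T (by funext i; fin_cases i <;> rfl)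
  have E16 : T.domDomCongr ((Equiv.swap 0 4)⁻¹ : Equiv.Perm (Fin 5)) ![a, b, c, d, e] = T ![e, b, c, d, a] := congrArg T (by funext i; fin_cases i <;> rfl)
  have E17 : T.domDomCongr ((Equiv.swap 0 4 * Equiv.swap 0 1)⁻¹ : Equiv.Perm (Fin 5)) ![a, b, c, d, e] = T ![e, a, c, d, b] := congrArg T (by funext i; fin_cases i <;> rfl)
  have E18 : T.domDomCongr ((Equiv.swap 0 4 * Equiv.swap 2 3)⁻¹ : Equiv.Perm (Fin 5)) ![a, b, c, d, e] = T ![e, b, d, c, a] := congrArg T (by funext i; fin_cases i <;> rfl)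
  have E19 : T.domDomCongr ((Equiv.swap 0 4 * (Equiv.swap 0 1 * Equiv.swap 2 3))⁻¹ : Equiv.Perm (Fin 5)) ![a, b, c, d, e] = T ![e, a, d, c, b] := congrArg T (by funext i; fin_cases i <;> rfl)
  have E20 : T.domDomCongr ((Equiv.swap 0 4 * Equiv.swap 1 3)⁻¹ : Equiv.Perm (Fin 5)) ![a, b, c, d, e] = T ![e, d, c, b, a] := congrArg T (by funext i; fin_cases i <;> rfl)
  have E21 : T.domDomCongr ((Equiv.swap 0 4 * Equiv.swap 1 3 * Equiv.swap 0 1)⁻¹ : Equiv.Perm (Fin 5)) ![a, b, c, d, e] = T ![e, d, c, a, b] := congrArg T (by funext i; fin_cases i <;> rfl)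
  have E22 : T.domDomCongr ((Equiv.swap 0 4 * Equiv.swap 1 3 * Equiv.swap 2 3)⁻¹ : Equiv.Perm (Fin 5)) ![a, b, c, d, e] = T ![e, c, d, b, a] := congrArg T (by funext i; fin_cases i <;> rfl)
  have E23 : T.domDomCongr ((Equiv.swap 0 4 * Equiv.swap 1 3 * (Equiv.swap 0 1 * Equiv.swap 2 3))⁻¹ : Equiv.Perm (Fin 5)) ![a, b, c, d, e] = T ![e, c, d, a, b] := congrArg T (by funext i; fin_cases i <;> rfl)
  have E24 : T.domDomCongr ((Equiv.swap 2 4)⁻¹ : Equiv.Perm (Fin 5)) ![a, b, c, d, e] = T ![a, b, e, d, c] := congrArg T (by funext i; fin_cases i <;> rfl)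
  have E25 : T.domDomCongr ((Equiv.swap 2 4 * Equiv.swap 0 1)⁻¹ : Equiv.Perm (Fin 5)) ![a, b, c, d, e] = T ![b, a, e, d, c] := congrArg T (by funext i; fin_cases i <;> rfl)
  have E26 : T.domDomCongr ((Equiv.swap 2 4 * Equiv.swap 2 3)⁻¹ : Equiv.Perm (Fin 5)) ![a, b, c, d, e] = T ![a, b, e, c, d] := congrArg T (by funext i; fin_cases i <;> rfl)
  have E27 : T.domDomCongr ((Equiv.swap 2 4 * (Equiv.swap 0 1 * Equiv.swap 2 3))⁻¹ : Equiv.Perm (Fin 5)) ![a, b, c, d, e] = T ![b, a, e, c, d] := congrArg T (by funext i; fin_cases i <;> rfl)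
  have E28 : T.domDomCongr ((Equiv.swap 2 4 * Equiv.swap 1 3)⁻¹ : Equiv.Perm (Fin 5)) ![a, b, c, d, e] = T ![a, d, e, b, c] := congrArg T (by funext i; fin_cases i <;> rfl)
  have E29 : T.domDomCongr ((Equiv.swap 2 4 * Equiv.swap 1 3 * Equiv.swap 0 1)⁻¹ : Equiv.Perm (Fin 5)) ![a, b, c, d, e] = T ![b, d, e, a, c] := congrArg T (by funext i; fin_cases i <;> rfl)
  have E30 : T.domDomCongr ((Equiv.swap 2 4 * Equiv.swap 1 3 * Equiv.swap 2 3)⁻¹ : Equiv.Perm (Fin 5)) ![a, b, c, d, e] = T ![a, c, e, b, d] := congrArg T (by funext i; fin_cases i <;> rfl)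
  have E31 : T.domDomCongr ((Equiv.swap 2 4 * Equiv.swap 1 3 * (Equiv.swap 0 1 * Equiv.swap 2 3))⁻¹ : Equiv.Perm (Fin 5)) ![a, b, c, d, e] = T ![b, c, e, a, d] := congrArg T (by funext i; fin_cases i <;> rfl)
  have E32 : T.domDomCongr ((Equiv.swap 0 2 * Equiv.swap 2 4)⁻¹ : Equiv.Perm (Fin 5)) ![a, b, c, d, e] = T ![e, b, a, d, c] := congrArg T (by funext i; fin_cases i <;> rfl)
  have E33 : T.domDomCongr ((Equiv.swap 0 2 * Equiv.swap 2 4 * Equiv.swap 0 1)⁻¹ : Equiv.Perm (Fin 5)) ![a, b, c, d, e] = T ![e, a, b, d, c] := congrArg T (by funext i; fin_cases i <;> rfl)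
  have E34 : T.domDomCongr ((Equiv.swap 0 2 * Equiv.swap 2 4 * Equiv.swap 2 3)⁻¹ : Equiv.Perm (Fin 5)) ![a, b, c, d, e] = T ![e, b, a, c, d] := congrArg T (by funext i; fin_cases i <;> rfl)
  have E35 : T.domDomCongr ((Equiv.swap 0 2 * Equiv.swap 2 4 * (Equiv.swap 0 1 * Equiv.swap 2 3))⁻¹ : Equiv.Perm (Fin 5)) ![a, b, c, d, e] = T ![e, a, b, c, d] := congrArg T (by funext i; fin_cases i <;> rfl)
  have E36 : T.domDomCongr ((Equiv.swap 0 2 * Equiv.swap 2 4 * Equiv.swap 1 3)⁻¹ : Equiv.Perm (Fin 5)) ![a, b, c, d, e] = T ![e, d, a, b, c] := congrArg T (by funext i; fin_cases i <;> rfl)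
  have E37 : T.domDomCongr ((Equiv.swap 0 2 * Equiv.swap 2 4 * Equiv.swap 1 3 * Equiv.swap 0 1)⁻¹ : Equiv.Perm (Fin 5)) ![a, b, c, d, e] = T ![e, d, b, a, c] := congrArg T (by funext i; fin_cases i <;> rfl)
  have E38 : T.domDomCongr ((Equiv.swap 0 2 * Equiv.swap 2 4 * Equiv.swap 1 3 * Equiv.swap 2 3)⁻¹ : Equiv.Perm (Fin 5)) ![a, b, c, d, e] = T ![e, c, a, b, d] := congrArg T (by funext i; fin_cases i <;> rfl)
  have E39 : T.domDomCongr ((Equiv.swap 0 2 * Equiv.swap 2 4 * Equiv.swap 1 3 * (Equiv.swap 0 1 * Equiv.swap 2 3))⁻¹ : Equiv.Perm (Fin 5)) ![a, b, c, d, e] = T ![e, c, b, a, d] := congrArg T (by funext i; fin_cases i <;> rfl)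
  have E40 : T.domDomCongr ((Equiv.swap 2 4 * Equiv.swap 0 2)⁻¹ : Equiv.Perm (Fin 5)) ![a, b, c, d, e] = T ![c, b, e, d, a] := congrArg T (by funext i; fin_cases i <;> rfl)
  have E41 : T.domDomCongr ((Equiv.swap 2 4 * Equiv.swap 0 2 * Equiv.swap 0 1)⁻¹ : Equiv.Perm (Fin 5)) ![a, b, c, d, e] = T ![c, a, e, d, b] := congrArg T (by funext i; fin_cases i <;> rfl)
  have E42 : T.domDomCongr ((Equiv.swap 2 4 * Equiv.swap 0 2 * Equiv.swap 2 3)⁻¹ : Equiv.Perm (Fin 5)) ![a, b, c, d, e] = T ![d, b, e, c, a] := congrArg T (by funext i; fin_cases i <;> rfl)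
  have E43 : T.domDomCongr ((Equiv.swap 2 4 * Equiv.swap 0 2 * (Equiv.swap 0 1 * Equiv.swap 2 3))⁻¹ : Equiv.Perm (Fin 5)) ![a, b, c, d, e] = T ![d, a, e, c, b] := congrArg T (by funext i; fin_cases i <;> rfl)
  have E44 : T.domDomCongr ((Equiv.swap 2 4 * Equiv.swap 0 2 * Equiv.swap 1 3)⁻¹ : Equiv.Perm (Fin 5)) ![a, b, c, d, e] = T ![c, d, e, b, a] := congrArg T (by funext i; fin_cases i <;> rfl)
  have E45 : T.domDomCongr ((Equiv.swap 2 4 * Equiv.swap 0 2 * Equiv.swap 1 3 * Equiv.swap 0 1)⁻¹ : Equiv.Perm (Fin 5)) ![a, b, c, d, e] = T ![c, d, e, a, b] := congrArg T (by funext i; fin_cases i <;> rfl)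
  have E46 : T.domDomCongr ((Equiv.swap 2 4 * Equiv.swap 0 2 * Equiv.swap 1 3 * Equiv.swap 2 3)⁻¹ : Equiv.Perm (Fin 5)) ![a, b, c, d, e] = T ![d, c, e, b, a] := congrArg T (by funext i; fin_cases i <;> rfl)
  have E47 : T.domDomCongr ((Equiv.swap 2 4 * Equiv.swap 0 2 * Equiv.swap 1 3 * (Equiv.swap 0 1 * Equiv.swap 2 3))⁻¹ : Equiv.Perm (Fin 5)) ![a, b, c, d, e] = T ![d, c, e, a, b] := congrArg T (by funext i; fin_cases i <;> rfl)
  rw [hytp]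
  simp only [astar_add, astar_sub, astar_single, inv_one, gact_add, gact_sub, gact_single,
    one_smul, MultilinearMap.add_apply, MultilinearMap.sub_apply]
  rw [E0, E1, E2, E3, E4, E5, E6, E7, E8, E9, E10, E11, E12, E13, E14, E15, E16, E17, E18, E19, E20, E21, E22, E23, E24, E25, E26, E27, E28, E29, E30, E31, E32, E33, E34, E35, E36, E37, E38, E39, E40, E41, E42, E43, E44, E45, E46, E47]

set_option maxHeartbeats 4000000 in
theorem stmt_4 (V : Type) [AddCommGroup V] [Module ℝ V] [FiniteDimensional ℝ V]
    (T : MultilinearMap ℝ (fun _ : Fin 5 => V) ℝ) :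
    ((∀ u w x y z : V, T ![w, x, y, z, u] = - T ![w, x, z, y, u]) ∧
     (∀ u w x y z : V, T ![w, x, y, z, u] = T ![y, z, w, x, u]) ∧
     (∀ u w x y z : V,
       T ![w, x, y, z, u] + T ![w, y, z, x, u] + T ![w, z, x, y, u] = 0) ∧
     (∀ u w x y z : V,
       T ![w, x, y, z, u] + T ![w, x, z, u, y] + T ![w, x, u, y, z] = 0)) ↔
    (1/24 : ℝ) • gact (astar ytp) T = T := by
  constructor
  · rintro ⟨h1, h2, h3, h4⟩
    apply MultilinearMap.ext
    intro v
    rw [MultilinearMap.smul_apply]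
    rw [show v = ![v 0, v 1, v 2, v 3, v 4] from by funext i; fin_cases i <;> rfl]
    rw [ytp_expand T (v 0) (v 1) (v 2) (v 3) (v 4)]
    simp only [smul_eq_mul]
    linear_combination ((-1 : ℝ)/8) * h1 (v 4) (v 0) (v 1) (v 2) (v 3) +
      ((-1 : ℝ)/8) * h1 (v 3) (v 0) (v 1) (v 2) (v 4) +
      ((1 : ℝ)/8) * h1 (v 2) (v 0) (v 1) (v 3) (v 4) +
      ((7 : ℝ)/12) * h1 (v 4) (v 0) (v 2) (v 1) (v 3) +
      ((1 : ℝ)/24) * h1 (v 1) (v 0) (v 2) (v 3) (v 4) +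
      ((1 : ℝ)/12) * h1 (v 4) (v 0) (v 3) (v 1) (v 2) +
      ((-5 : ℝ)/24) * h1 (v 1) (v 0) (v 3) (v 2) (v 4) +
      ((-1 : ℝ)/24) * h1 (v 1) (v 0) (v 4) (v 2) (v 3) +
      ((1 : ℝ)/24) * h1 (v 4) (v 1) (v 0) (v 2) (v 3) +
      ((1 : ℝ)/24) * h1 (v 3) (v 1) (v 0) (v 2) (v 4) +
      ((-1 : ℝ)/24) * h1 (v 2) (v 1) (v 0) (v 3) (v 4) +
      ((1 : ℝ)/12) * h1 (v 4) (v 1) (v 2) (v 0) (v 3) +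
      ((-1 : ℝ)/6) * h1 (v 3) (v 1) (v 2) (v 0) (v 4) +
      ((-1 : ℝ)/24) * h1 (v 0) (v 1) (v 2) (v 3) (v 4) +
      ((-1 : ℝ)/12) * h1 (v 4) (v 1) (v 3) (v 0) (v 2) +
      ((1 : ℝ)/6) * h1 (v 2) (v 1) (v 3) (v 0) (v 4) +
      ((5 : ℝ)/24) * h1 (v 0) (v 1) (v 3) (v 2) (v 4) +
      ((1 : ℝ)/24) * h1 (v 0) (v 1) (v 4) (v 2) (v 3) +
      ((-1 : ℝ)/24) * h1 (v 1) (v 2) (v 0) (v 3) (v 4) +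
      ((1 : ℝ)/24) * h1 (v 0) (v 2) (v 1) (v 3) (v 4) +
      ((-1 : ℝ)/8) * h1 (v 4) (v 2) (v 3) (v 0) (v 1) +
      ((-1 : ℝ)/8) * h1 (v 1) (v 2) (v 3) (v 0) (v 4) +
      ((1 : ℝ)/8) * h1 (v 0) (v 2) (v 3) (v 1) (v 4) +
      ((-1 : ℝ)/24) * h1 (v 3) (v 2) (v 4) (v 0) (v 1) +
      ((-1 : ℝ)/24) * h1 (v 1) (v 2) (v 4) (v 0) (v 3) +
      ((1 : ℝ)/24) * h1 (v 0) (v 2) (v 4) (v 1) (v 3) +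
      ((1 : ℝ)/24) * h1 (v 1) (v 3) (v 0) (v 2) (v 4) +
      ((-1 : ℝ)/24) * h1 (v 0) (v 3) (v 1) (v 2) (v 4) +
      ((1 : ℝ)/24) * h1 (v 4) (v 3) (v 2) (v 0) (v 1) +
      ((1 : ℝ)/24) * h1 (v 1) (v 3) (v 2) (v 0) (v 4) +
      ((-1 : ℝ)/24) * h1 (v 0) (v 3) (v 2) (v 1) (v 4) +
      ((1 : ℝ)/24) * h1 (v 2) (v 3) (v 4) (v 0) (v 1) +
      ((1 : ℝ)/24) * h1 (v 1) (v 3) (v 4) (v 0) (v 2) +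
      ((-1 : ℝ)/24) * h1 (v 0) (v 3) (v 4) (v 1) (v 2) +
      ((1 : ℝ)/24) * h1 (v 1) (v 4) (v 0) (v 2) (v 3) +
      ((-1 : ℝ)/24) * h1 (v 0) (v 4) (v 1) (v 2) (v 3) +
      ((1 : ℝ)/24) * h1 (v 3) (v 4) (v 2) (v 0) (v 1) +
      ((1 : ℝ)/24) * h1 (v 1) (v 4) (v 2) (v 0) (v 3) +
      ((-1 : ℝ)/24) * h1 (v 0) (v 4) (v 2) (v 1) (v 3) +
      ((-1 : ℝ)/24) * h1 (v 2) (v 4) (v 3) (v 0) (v 1) +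
      ((-1 : ℝ)/24) * h1 (v 1) (v 4) (v 3) (v 0) (v 2) +
      ((1 : ℝ)/24) * h1 (v 0) (v 4) (v 3) (v 1) (v 2) +
      ((-1 : ℝ)/6) * h2 (v 4) (v 0) (v 1) (v 2) (v 3) +
      ((-1 : ℝ)/24) * h2 (v 3) (v 0) (v 1) (v 2) (v 4) +
      ((1 : ℝ)/12) * h2 (v 4) (v 0) (v 1) (v 3) (v 2) +
      ((1 : ℝ)/24) * h2 (v 2) (v 0) (v 1) (v 3) (v 4) +
      ((1 : ℝ)/12) * h2 (v 3) (v 0) (v 1) (v 4) (v 2) +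
      ((-1 : ℝ)/12) * h2 (v 2) (v 0) (v 1) (v 4) (v 3) +
      ((-1 : ℝ)/3) * h2 (v 4) (v 0) (v 2) (v 1) (v 3) +
      ((1 : ℝ)/24) * h2 (v 4) (v 0) (v 2) (v 3) (v 1) +
      ((1 : ℝ)/24) * h2 (v 1) (v 0) (v 2) (v 3) (v 4) +
      ((1 : ℝ)/24) * h2 (v 3) (v 0) (v 2) (v 4) (v 1) +
      ((-1 : ℝ)/24) * h2 (v 1) (v 0) (v 2) (v 4) (v 3) +
      ((1 : ℝ)/3) * h2 (v 4) (v 0) (v 3) (v 1) (v 2) +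
      ((-1 : ℝ)/24) * h2 (v 4) (v 0) (v 3) (v 2) (v 1) +
      ((-1 : ℝ)/24) * h2 (v 1) (v 0) (v 3) (v 2) (v 4) +
      ((-1 : ℝ)/24) * h2 (v 2) (v 0) (v 3) (v 4) (v 1) +
      ((1 : ℝ)/24) * h2 (v 1) (v 0) (v 3) (v 4) (v 2) +
      ((-1 : ℝ)/6) * h2 (v 3) (v 0) (v 4) (v 1) (v 2) +
      ((1 : ℝ)/6) * h2 (v 2) (v 0) (v 4) (v 1) (v 3) +
      ((-1 : ℝ)/8) * h2 (v 1) (v 0) (v 4) (v 2) (v 3) +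
      ((1 : ℝ)/24) * h2 (v 1) (v 0) (v 4) (v 3) (v 2) +
      ((-1 : ℝ)/12) * h2 (v 4) (v 1) (v 0) (v 2) (v 3) +
      ((-1 : ℝ)/24) * h2 (v 3) (v 1) (v 0) (v 2) (v 4) +
      ((1 : ℝ)/24) * h2 (v 2) (v 1) (v 0) (v 3) (v 4) +
      ((-1 : ℝ)/24) * h2 (v 4) (v 1) (v 2) (v 3) (v 0) +
      ((-1 : ℝ)/24) * h2 (v 0) (v 1) (v 2) (v 3) (v 4) +
      ((-1 : ℝ)/24) * h2 (v 3) (v 1) (v 2) (v 4) (v 0) +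
      ((1 : ℝ)/24) * h2 (v 0) (v 1) (v 2) (v 4) (v 3) +
      ((1 : ℝ)/24) * h2 (v 4) (v 1) (v 3) (v 2) (v 0) +
      ((1 : ℝ)/24) * h2 (v 0) (v 1) (v 3) (v 2) (v 4) +
      ((1 : ℝ)/24) * h2 (v 2) (v 1) (v 3) (v 4) (v 0) +
      ((-1 : ℝ)/24) * h2 (v 0) (v 1) (v 3) (v 4) (v 2) +
      ((1 : ℝ)/8) * h2 (v 0) (v 1) (v 4) (v 2) (v 3) +
      ((-1 : ℝ)/24) * h2 (v 0) (v 1) (v 4) (v 3) (v 2) +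
      ((1 : ℝ)/24) * h2 (v 1) (v 2) (v 0) (v 3) (v 4) +
      ((-1 : ℝ)/24) * h2 (v 0) (v 2) (v 1) (v 3) (v 4) +
      ((1 : ℝ)/12) * h2 (v 1) (v 2) (v 3) (v 4) (v 0) +
      ((-1 : ℝ)/12) * h2 (v 0) (v 2) (v 3) (v 4) (v 1) +
      ((1 : ℝ)/24) * h2 (v 1) (v 2) (v 4) (v 3) (v 0) +
      ((-1 : ℝ)/24) * h2 (v 0) (v 2) (v 4) (v 3) (v 1) +
      ((-2 : ℝ)/3) * h3 (v 4) (v 0) (v 1) (v 2) (v 3) +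
      ((1 : ℝ)/6) * h3 (v 3) (v 0) (v 1) (v 2) (v 4) +
      ((-1 : ℝ)/6) * h3 (v 2) (v 0) (v 1) (v 3) (v 4) +
      ((1 : ℝ)/6) * h3 (v 1) (v 0) (v 2) (v 3) (v 4) +
      ((-1 : ℝ)/6) * h3 (v 0) (v 1) (v 2) (v 3) (v 4) +
      ((-1 : ℝ)/4) * h4 (v 4) (v 0) (v 2) (v 1) (v 3) +
      ((1 : ℝ)/4) * h4 (v 4) (v 0) (v 3) (v 1) (v 2) +
      ((1 : ℝ)/4) * h4 (v 4) (v 1) (v 2) (v 0) (v 3) +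
      ((-1 : ℝ)/4) * h4 (v 4) (v 1) (v 3) (v 0) (v 2)
  · intro hE
    have key : ∀ a b c d e : V, (T ![a, b, c, d, e] - T ![b, a, c, d, e] - T ![a, b, d, c, e] + T ![b, a, d, c, e] + T ![a, d, c, b, e] - T ![b, d, c, a, e] - T ![a, c, d, b, e] + T ![b, c, d, a, e] + T ![c, b, a, d, e] - T ![c, a, b, d, e] - T ![d, b, a, c, e] + T ![d, a, b, c, e] + T ![c, d, a, b, e] - T ![c, d, b, a, e] - T ![d, c, a, b, e] + T ![d, c, b, a, e] + T ![e, b, c, d, a] - T ![e, a, c, d, b] - T ![e, b, d, c, a] + T ![e, a, d, c, b] + T ![e, d, c, b, a] - T ![e, d, c, a, b] - T ![e, c, d, b, a] + T ![e, c, d, a, b] + T ![a, b, e, d, c] - T ![b, a, e, d, c] - T ![a, b, e, c, d] + T ![b, a, e, c, d] + T ![a, d, e, b, c] - T ![b, d, e, a, c] - T ![a, c, e, b, d] + T ![b, c, e, a, d] + T ![e, b, a, d, c] - T ![e, a, b, d, c] - T ![e, b, a, c, d] + T ![e, a, b, c, d] + T ![e, d, a, b, c] - T ![e, d, b, a, c]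 - T ![e, c, a, b, d] + T ![e, c, b, a, d] + T ![c, b, e, d, a] - T ![c, a, e, d, b] - T ![d, b, e, c, a] + T ![d, a, e, c, b] + T ![c, d, e, b, a] - T ![c, d, e, a, b] - T ![d, c, e, b, a] + T ![d, c, e, a, b]) = 24 * T ![a, b, c, d, e] := by
      intro a b c d e
      have h := congrArg (fun M : MultilinearMap ℝ (fun _ : Fin 5 => V) ℝ => M ![a, b, c, d, e]) hE
      simp only [MultilinearMap.smul_apply, smul_eq_mul] at h
      rw [ytp_expand T a b c d e] at h
      linear_combination (24:ℝ) * h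
    refine ⟨fun u w x y z => ?_, fun u w x y z => ?_, fun u w x y z => ?_, fun u w x y z => ?_⟩
    · linear_combination (-(1:ℝ)/24) * key w x y z u + (-(1:ℝ)/24) * key w x z y u
    · linear_combination (-(1:ℝ)/24) * key w x y z u + ((1:ℝ)/24) * key y z w x u
    · linear_combination (-(1:ℝ)/24) * key w x y z u + (-(1:ℝ)/24) * key w y z x u + (-(1:ℝ)/24) * key w z x y u
    · linear_combination (-(1:ℝ)/24) * key w x y z u + (-(1:ℝ)/24) * key w x z u y + (-(1:ℝ)/24) * key w x u y z
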